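/- The ELBO of the HiT-MDP variational trajectory distribution equals the expected cumulative reward plus option regularizer plus policy log-likelihood (entropy) terms, with the environment dynamics cancelling: Σ_{τ with q(τ) > 0} q(τ) * Real.log (w(τ) / q(τ)) = Σ_{τ with q(τ) > 0} q(τ) * Σ_{t=1}^{T} ( r s_{t−1} a_t + F o_t s_{t−1} a_t o_{t−1} − Real.log (πA s_{t−1} o_t a_t) − Real.log (πO s_{t−1} o_{t−1} o_t) ), where the s_t, o_t, a_t are the components of the trajectory τ. -/

import Mathlib

open Finset

/-- The state `s_{t-1}` preceding step `t` of a HiT-MDP trajectory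
`((s_0, o_0), (o_1, a_1, s_1), …, (o_T, a_T, s_T))`. -/
def prevS {S O A : Type*} {T : ℕ} (τ : (S × O) × (Fin T → O × A × S)) (t : Fin T) : S :=
  if t.val = 0 then τ.1.1 else (τ.2 ⟨t.val - 1, by have := t.isLt; omega⟩).2.2

/-- The option `o_{t-1}` preceding step `t` of a HiT-MDP trajectory. -/
def prevO {S O A : Type*} {T : ℕ} (τ : (S × O) × (Fin T → O × A × S)) (t : Fin T) : O :=
  if t.val = 0 then τ.1.2 else (τ.2 ⟨t.val - 1, by have := t.isLt; omega⟩).1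

/-- the ELBO of the HiT-MDP variational trajectory distribution
equals the expected cumulative reward plus option regularizer plus policy
entropy (negative log-likelihood) terms; the environment dynamics cancel. -/
theorem hitmdp_elbo_identity
    {S O A : Type*} [Fintype S] [Fintype O] [Fintype A]
    [Nonempty S] [Nonempty O] [Nonempty A]
    (T : ℕ) (hT : 1 ≤ T)
    (ρ : S × O → ℝ) (hρ0 : ∀ x, 0 ≤ ρ x) (hρ1 : ∑ x, ρ x = 1)
    (p : S → A → S → ℝ) (hp0 : ∀ s a s', 0 ≤ p s a s') (hp1 : ∀ s a, ∑ s', p s a s' = 1)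
    (πA : S → O → A → ℝ) (hπA : ∀ s o a, 0 < πA s o a) (hπA1 : ∀ s o, ∑ a, πA s o a = 1)
    (πO : S → O → O → ℝ) (hπO : ∀ s o o', 0 < πO s o o') (hπO1 : ∀ s o, ∑ o', πO s o o' = 1)
    (r : S → A → ℝ) (F : O → S → A → O → ℝ)
    (q : ((S × O) × (Fin T → O × A × S)) → ℝ)
    (hq : ∀ τ, q τ = ρ τ.1 * ∏ t : Fin T,
      πO (prevS τ t) (prevO τ t) (τ.2 t).1 *
      πA (prevS τ t) (τ.2 t).1 (τ.2 t).2.1 *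
      p (prevS τ t) (τ.2 t).2.1 (τ.2 t).2.2)
    (w : ((S × O) × (Fin T → O × A × S)) → ℝ)
    (hw : ∀ τ, w τ = ρ τ.1 * ∏ t : Fin T,
      p (prevS τ t) (τ.2 t).2.1 (τ.2 t).2.2 *
      Real.exp (r (prevS τ t) (τ.2 t).2.1) *
      Real.exp (F (τ.2 t).1 (prevS τ t) (τ.2 t).2.1 (prevO τ t))) :
    ∑ τ ∈ univ.filter (fun τ => 0 < q τ), q τ * Real.log (w τ / q τ) =
      ∑ τ ∈ univ.filter (fun τ => 0 < q τ), q τ * ∑ t : Fin T,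
        (r (prevS τ t) (τ.2 t).2.1
          + F (τ.2 t).1 (prevS τ t) (τ.2 t).2.1 (prevO τ t)
          - Real.log (πA (prevS τ t) (τ.2 t).1 (τ.2 t).2.1)
          - Real.log (πO (prevS τ t) (prevO τ t) (τ.2 t).1)) := by
  apply Finset.sum_congr rfl
  intro τ hτ
  rw [mem_filter] at hτ
  have hq0 := hτ.2
  congr 1
  have hρpos : 0 < ρ τ.1 := by
    rcases lt_or_eq_of_le (hρ0 τ.1) with h | h
    · exact h
    · rw [hq τ, ← h, zero_mul] at hq0; exact absurd hq0 (lt_irrefl 0)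
  have hppos : ∀ t : Fin T, 0 < p (prevS τ t) (τ.2 t).2.1 (τ.2 t).2.2 := by
    intro t
    rcases lt_or_eq_of_le (hp0 (prevS τ t) (τ.2 t).2.1 (τ.2 t).2.2) with h | h
    · exact h
    · exfalso
      rw [hq τ] at hq0
      have : (∏ t : Fin T, πO (prevS τ t) (prevO τ t) (τ.2 t).1 *
          πA (prevS τ t) (τ.2 t).1 (τ.2 t).2.1 *
          p (prevS τ t) (τ.2 t).2.1 (τ.2 t).2.2) = 0 :=
        Finset.prod_eq_zero (mem_univ t) (by rw [← h, mul_zero])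
      rw [this, mul_zero] at hq0; exact lt_irrefl 0 hq0
  have hw' : w τ / q τ = ∏ t : Fin T,
      Real.exp (r (prevS τ t) (τ.2 t).2.1) *
      Real.exp (F (τ.2 t).1 (prevS τ t) (τ.2 t).2.1 (prevO τ t)) /
      (πA (prevS τ t) (τ.2 t).1 (τ.2 t).2.1 * πO (prevS τ t) (prevO τ t) (τ.2 t).1) := by
    rw [hw, hq, mul_div_mul_left _ _ (ne_of_gt hρpos), ← Finset.prod_div_distrib]
    apply Finset.prod_congr rfl
    intro t _
    have hA := (hπA (prevS τ t) (τ.2 t).1 (τ.2 t).2.1).ne'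
    have hO := (hπO (prevS τ t) (prevO τ t) (τ.2 t).1).ne'
    have hP := (hppos t).ne'
    field_simp
  have hfpos : ∀ t : Fin T, (0:ℝ) <
      Real.exp (r (prevS τ t) (τ.2 t).2.1) *
      Real.exp (F (τ.2 t).1 (prevS τ t) (τ.2 t).2.1 (prevO τ t)) /
      (πA (prevS τ t) (τ.2 t).1 (τ.2 t).2.1 * πO (prevS τ t) (prevO τ t) (τ.2 t).1) := by
    intro t
    have hA := hπA (prevS τ t) (τ.2 t).1 (τ.2 t).2.1
    have hO := hπO (prevS τ t) (prevO τ t) (τ.2 t).1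
    positivity
  rw [hw']
  rw [Real.log_prod (fun t _ => (hfpos t).ne')]
  apply Finset.sum_congr rfl
  intro t _
  have hA := hπA (prevS τ t) (τ.2 t).1 (τ.2 t).2.1
  have hO := hπO (prevS τ t) (prevO τ t) (τ.2 t).1
  rw [Real.log_div (by positivity) (by positivity),
    Real.log_mul (Real.exp_ne_zero _) (Real.exp_ne_zero _),
    Real.log_mul hA.ne' hO.ne', Real.log_exp, Real.log_exp]
  ring
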